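/- Non-closure of Hadamard products of a variety: Consider the affine cone C = {(x,y,z) ∈ ℂ^3 : xz + y^2 − x^2 = 0}. The point (0,1,0) is not a coordinatewise product of two points of C, but it is a limit (as ε → 0) of coordinatewise products of points of C; specifically, (ε, 1, ε − 1/ε) and (1, 1, 0) both lie on C for ε ≠ 0 and their coordinatewise product tends to (0, 1, 0). Hence the set {p ⊙ q : p, q ∈ C} (coordinatewise product) is not closed. -/
import Mathlib


/-- The affine cone {(x,y,z) ∈ ℂ³ : xz + y² − x² = 0}. -/
def coneXYZ : Set (ℂ × ℂ × ℂ) := {p | p.1 * p.2.2 + p.2.1 ^ 2 - p.1 ^ 2 = 0}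

/-- The set of coordinatewise (Hadamard) products of pairs of points of the cone. -/
def hadamardProds : Set (ℂ × ℂ × ℂ) :=
  {p | ∃ a ∈ coneXYZ, ∃ b ∈ coneXYZ,
    p = (a.1 * b.1, a.2.1 * b.2.1, a.2.2 * b.2.2)}

lemma notMem_hp : ((0, 1, 0) : ℂ × ℂ × ℂ) ∉ hadamardProds := by
  rintro ⟨a, ha, b, hb, h⟩
  simp only [coneXYZ, Set.mem_setOf_eq] at ha hb
  rw [Prod.ext_iff, Prod.ext_iff] at h
  obtain ⟨h1, h2, _⟩ := h
  rcases mul_eq_zero.mp h1.symm with h0 | h0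
  · rw [h0] at ha
    have : a.2.1 = 0 := by
      have : a.2.1 ^ 2 = 0 := by ring_nf at ha ⊢; linear_combination ha
      exact pow_eq_zero_iff (by norm_num) |>.mp this
    rw [this] at h2; simp at h2
  · rw [h0] at hb
    have : b.2.1 = 0 := by
      have : b.2.1 ^ 2 = 0 := by ring_nf at hb ⊢; linear_combination hb
      exact pow_eq_zero_iff (by norm_num) |>.mp this
    rw [this] at h2; simp at h2

lemma mem_closure_hp : ((0, 1, 0) : ℂ × ℂ × ℂ) ∈ closure hadamardProds := by
  have key : ∀ ε : ℂ, ε ≠ 0 → ((ε, 1, 0) : ℂ × ℂ × ℂ) ∈ hadamardProds := by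
    intro ε hε
    refine ⟨(ε, 1, ε - 1/ε), ?_, (1, 1, 0), ?_, ?_⟩
    · show ε * (ε - 1/ε) + 1 ^ 2 - ε ^ 2 = 0
      field_simp
      ring
    · show (1:ℂ) * 0 + 1 ^ 2 - 1 ^ 2 = 0
      ring
    · simp
  have htend : Filter.Tendsto (fun n : ℕ => (((1/(n+1:ℝ) : ℝ) : ℂ), (1:ℂ), (0:ℂ)))
      Filter.atTop (nhds ((0, 1, 0) : ℂ × ℂ × ℂ)) := by
    rw [nhds_prod_eq, nhds_prod_eq]
    refine Filter.Tendsto.prodMk ?_ (Filter.Tendsto.prodMk tendsto_const_nhds tendsto_const_nhds)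
    have := (Complex.continuous_ofReal.tendsto 0).comp tendsto_one_div_add_atTop_nhds_zero_nat
    simpa [Function.comp_def, one_div] using this
  refine mem_closure_of_tendsto htend (Filter.Eventually.of_forall fun n => ?_)
  apply key
  simp only [ne_eq, Complex.ofReal_eq_zero]
  positivity

theorem hadamard_products_not_closed :
    ((0, 1, 0) : ℂ × ℂ × ℂ) ∉ hadamardProds ∧
    ((0, 1, 0) : ℂ × ℂ × ℂ) ∈ closure hadamardProds ∧
    ¬ IsClosed hadamardProds := by
  refine ⟨notMem_hp, mem_closure_hp, fun hc => notMem_hp (hc.closure_subset mem_closure_hp)⟩
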